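/- Every graph G ∈ H₄* admits a frozen (χ(G)+1)-coloring; here χ(G) = p + 2 where p = |S₁| = |S₂|. -/
import Mathlib


open SimpleGraph

/-- A proper coloring of `G` with colors in `Fin ℓ`. -/
def IsProperColoring {V : Type*} (G : SimpleGraph V) (ℓ : ℕ) (f : V → Fin ℓ) : Prop :=
  ∀ ⦃a b : V⦄, G.Adj a b → f a ≠ f b

/-- A walk in the reconfiguration graph `R_ℓ(G)`: a sequence `c 0, c 1, …, c m` of proper
`ℓ`-colorings of `G` in which consecutive colorings differ on at most one vertex. -/
def IsRecolorSeq {V : Type*} (G : SimpleGraph V) (ℓ m : ℕ) (c : ℕ → V → Fin ℓ) : Prop :=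
  (∀ i ≤ m, IsProperColoring G ℓ (c i)) ∧
    ∀ i < m, ∀ a b : V, a ≠ b → c i a ≠ c (i + 1) a → c i b = c (i + 1) b

/-- The number of times the vertex `a` is recolored along the sequence `c 0, …, c m`. -/
def recolorCount {V : Type*} {ℓ : ℕ} (m : ℕ) (c : ℕ → V → Fin ℓ) (a : V) : ℕ :=
  ((Finset.range m).filter fun i => c i a ≠ c (i + 1) a).card

/-- The cycle `Cₙ` on `Fin n` (for `n ≥ 3`). -/
def cyc (n : ℕ) [NeZero n] : SimpleGraph (Fin n) := SimpleGraph.fromRel fun a b => a + 1 = b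

/-- The graph `P₂ + P₃`, the disjoint union of an edge and a path on three vertices. -/
def p2p3 : SimpleGraph (Fin 5) := SimpleGraph.fromRel fun a b =>
  (a = 0 ∧ b = 1) ∨ (a = 2 ∧ b = 3) ∨ (a = 3 ∧ b = 4)

/-- Adjacency in the 6-cycle on `Fin 6` (indices mod 6). -/
def c6adj (i j : Fin 6) : Prop := i + 1 = j ∨ j + 1 = i

/-- The class `H₄*`: six vertices `v 0, …, v 5` inducing a 6-cycle and two disjoint cliques
`S₁, S₂` with `|S₁| = |S₂| = p ≥ 1`; `S₁` is complete to `{v₁,v₂,v₃,v₆}` and `S₂` to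
`{v₂,v₃,v₄,v₅}`; no other edges. (Here `vᵢ` of the paper is `v (i-1)`.) -/
structure H4StarData {V : Type*} (G : SimpleGraph V) (p : ℕ) where
  v : Fin 6 → V
  S1 : Finset V
  S2 : Finset V
  inj : Function.Injective v
  notin : ∀ i, v i ∉ S1 ∧ v i ∉ S2
  d12 : Disjoint S1 S2
  card1 : S1.card = p
  card2 : S2.card = p
  hp : 1 ≤ p
  cover : ∀ x : V, (x ∈ S1 ∨ x ∈ S2) ∨ ∃ i, x = v i
  adj_iff : ∀ x y : V, G.Adj x y ↔ x ≠ y ∧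
    ((∃ i j : Fin 6, x = v i ∧ y = v j ∧ c6adj i j) ∨
     (x ∈ S1 ∧ y ∈ S1) ∨ (x ∈ S2 ∧ y ∈ S2) ∨
     (x ∈ S1 ∧ (y = v 0 ∨ y = v 1 ∨ y = v 2 ∨ y = v 5)) ∨
     (y ∈ S1 ∧ (x = v 0 ∨ x = v 1 ∨ x = v 2 ∨ x = v 5)) ∨
     (x ∈ S2 ∧ (y = v 1 ∨ y = v 2 ∨ y = v 3 ∨ y = v 4)) ∨
     (y ∈ S2 ∧ (x = v 1 ∨ x = v 2 ∨ x = v 3 ∨ x = v 4)))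

namespace H4StarData

attribute [local instance] Classical.propDecidable

variable {V : Type*} {G : SimpleGraph V} {p : ℕ} (h : H4StarData G p)

noncomputable def e1 : h.S1 ≃ Fin p := Finset.equivFinOfCardEq h.card1
noncomputable def e2 : h.S2 ≃ Fin p := Finset.equivFinOfCardEq h.card2

lemma exV {x : V} (h1 : x ∉ h.S1) (h2 : x ∉ h.S2) : ∃ i, x = h.v i :=
  (h.cover x).resolve_left (by tauto)

lemma notS1S2 {x : V} (hx : x ∈ h.S2) : x ∉ h.S1 :=
  fun hh => (Finset.disjoint_left.mp h.d12 hh) hx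

/-- The frozen `(p+3)`-coloring. -/
noncomputable def col3 (x : V) : Fin (p + 3) :=
  if hx : x ∈ h.S1 then Fin.castLE (by omega) (h.e1 ⟨x, hx⟩)
  else if hx2 : x ∈ h.S2 then Fin.castLE (by omega) (h.e2 ⟨x, hx2⟩)
  else ⟨p + (Classical.choose (h.exV hx hx2)).val % 3, by omega⟩

/-- The optimal `(p+2)`-coloring. -/
noncomputable def col2 (x : V) : Fin (p + 2) :=
  if hx : x ∈ h.S1 then Fin.castLE (by omega) (h.e1 ⟨x, hx⟩)
  else if hx2 : x ∈ h.S2 then Fin.castLE (by omega) (h.e2 ⟨x, hx2⟩)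
  else ⟨p + ((Classical.choose (h.exV hx hx2)).val + 1) % 2, by omega⟩

lemma col3_S1 {x : V} (hx : x ∈ h.S1) :
    h.col3 x = Fin.castLE (by omega) (h.e1 ⟨x, hx⟩) := dif_pos hx

lemma col3_S2 {x : V} (hx : x ∈ h.S2) :
    h.col3 x = Fin.castLE (by omega) (h.e2 ⟨x, hx⟩) := by
  rw [col3, dif_neg (h.notS1S2 hx), dif_pos hx]

lemma col3_v (i : Fin 6) : h.col3 (h.v i) = ⟨p + i.val % 3, by omega⟩ := by
  have h1 := (h.notin i).1
  have h2 := (h.notin i).2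
  rw [col3, dif_neg h1, dif_neg h2]
  have heq : Classical.choose (h.exV h1 h2) = i :=
    (h.inj (Classical.choose_spec (h.exV h1 h2))).symm
  apply Fin.ext
  simp [heq]

lemma col2_S1 {x : V} (hx : x ∈ h.S1) :
    h.col2 x = Fin.castLE (by omega) (h.e1 ⟨x, hx⟩) := dif_pos hx

lemma col2_S2 {x : V} (hx : x ∈ h.S2) :
    h.col2 x = Fin.castLE (by omega) (h.e2 ⟨x, hx⟩) := by
  rw [col2, dif_neg (h.notS1S2 hx), dif_pos hx]

lemma col2_v (i : Fin 6) : h.col2 (h.v i) = ⟨p + (i.val + 1) % 2, by omega⟩ := by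
  have h1 := (h.notin i).1
  have h2 := (h.notin i).2
  rw [col2, dif_neg h1, dif_neg h2]
  have heq : Classical.choose (h.exV h1 h2) = i :=
    (h.inj (Classical.choose_spec (h.exV h1 h2))).symm
  apply Fin.ext
  simp [heq]

lemma col3_lt {x : V} (hx : x ∈ h.S1 ∨ x ∈ h.S2) : (h.col3 x).val < p := by
  rcases hx with hx | hx
  · rw [h.col3_S1 hx]; exact (h.e1 ⟨x, hx⟩).isLt
  · rw [h.col3_S2 hx]; exact (h.e2 ⟨x, hx⟩).isLt

lemma col2_lt {x : V} (hx : x ∈ h.S1 ∨ x ∈ h.S2) : (h.col2 x).val < p := by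
  rcases hx with hx | hx
  · rw [h.col2_S1 hx]; exact (h.e1 ⟨x, hx⟩).isLt
  · rw [h.col2_S2 hx]; exact (h.e2 ⟨x, hx⟩).isLt

lemma c6adj_ne {i j : Fin 6} (hij : c6adj i j) : i ≠ j := by
  have : ∀ i j : Fin 6, (i + 1 = j ∨ j + 1 = i) → i ≠ j := by decide
  exact this i j hij

lemma col3_proper : IsProperColoring G (p + 3) h.col3 := by
  have key : ∀ i j : Fin 6, (i + 1 = j ∨ j + 1 = i) → i.val % 3 ≠ j.val % 3 := by decide
  intro a b hab heq
  rw [h.adj_iff] at hab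
  obtain ⟨hne, hc⟩ := hab
  have hval := congrArg Fin.val heq
  rcases hc with ⟨i, j, rfl, rfl, hij⟩ | ⟨ha, hb⟩ | ⟨ha, hb⟩ | ⟨ha, hb⟩ | ⟨hb, ha⟩ |
    ⟨ha, hb⟩ | ⟨hb, ha⟩
  · rw [h.col3_v i, h.col3_v j] at hval
    exact key i j hij (by simpa using hval)
  · rw [h.col3_S1 ha, h.col3_S1 hb] at heq
    have := h.e1.injective (Fin.castLE_injective _ heq)
    exact hne (congrArg Subtype.val this)
  · rw [h.col3_S2 ha, h.col3_S2 hb] at heq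
    have := h.e2.injective (Fin.castLE_injective _ heq)
    exact hne (congrArg Subtype.val this)
  · have h1 := h.col3_lt (Or.inl ha)
    rcases hb with rfl | rfl | rfl | rfl <;> rw [h.col3_v] at hval <;> simp at hval <;> omega
  · have h1 := h.col3_lt (Or.inl hb)
    rcases ha with rfl | rfl | rfl | rfl <;> rw [h.col3_v] at hval <;> simp at hval <;> omega
  · have h1 := h.col3_lt (Or.inr ha)
    rcases hb with rfl | rfl | rfl | rfl <;> rw [h.col3_v] at hval <;> simp at hval <;> omega
  · have h1 := h.col3_lt (Or.inr hb)
    rcases ha with rfl | rfl | rfl | rfl <;> rw [h.col3_v] at hval <;> simp at hval <;> omega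

lemma col2_proper : IsProperColoring G (p + 2) h.col2 := by
  have key : ∀ i j : Fin 6, (i + 1 = j ∨ j + 1 = i) → (i.val + 1) % 2 ≠ (j.val + 1) % 2 := by decide
  intro a b hab heq
  rw [h.adj_iff] at hab
  obtain ⟨hne, hc⟩ := hab
  have hval := congrArg Fin.val heq
  rcases hc with ⟨i, j, rfl, rfl, hij⟩ | ⟨ha, hb⟩ | ⟨ha, hb⟩ | ⟨ha, hb⟩ | ⟨hb, ha⟩ |
    ⟨ha, hb⟩ | ⟨hb, ha⟩
  · rw [h.col2_v i, h.col2_v j] at hval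
    exact key i j hij (by simpa using hval)
  · rw [h.col2_S1 ha, h.col2_S1 hb] at heq
    have := h.e1.injective (Fin.castLE_injective _ heq)
    exact hne (congrArg Subtype.val this)
  · rw [h.col2_S2 ha, h.col2_S2 hb] at heq
    have := h.e2.injective (Fin.castLE_injective _ heq)
    exact hne (congrArg Subtype.val this)
  · have h1 := h.col2_lt (Or.inl ha)
    rcases hb with rfl | rfl | rfl | rfl <;> rw [h.col2_v] at hval <;> simp at hval <;> omega
  · have h1 := h.col2_lt (Or.inl hb)
    rcases ha with rfl | rfl | rfl | rfl <;> rw [h.col2_v] at hval <;> simp at hval <;> omega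
  · have h1 := h.col2_lt (Or.inr ha)
    rcases hb with rfl | rfl | rfl | rfl <;> rw [h.col2_v] at hval <;> simp at hval <;> omega
  · have h1 := h.col2_lt (Or.inr hb)
    rcases ha with rfl | rfl | rfl | rfl <;> rw [h.col2_v] at hval <;> simp at hval <;> omega

lemma col3_e1_symm (c : Fin p) : h.col3 ↑(h.e1.symm c) = Fin.castLE (by omega) c := by
  have hy : (↑(h.e1.symm c) : V) ∈ h.S1 := (h.e1.symm c).2
  rw [h.col3_S1 hy]
  congr 1
  exact h.e1.apply_symm_apply c

lemma col3_e2_symm (c : Fin p) : h.col3 ↑(h.e2.symm c) = Fin.castLE (by omega) c := by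
  have hy : (↑(h.e2.symm c) : V) ∈ h.S2 := (h.e2.symm c).2
  rw [h.col3_S2 hy]
  congr 1
  exact h.e2.apply_symm_apply c

end H4StarData


/-- every `G ∈ H₄*` has `χ(G) = p + 2` and admits a frozen
`(χ(G)+1)`-coloring, i.e. a proper `(p+3)`-coloring in which every color appears in the
closed neighborhood of every vertex. -/
theorem stmt13 {V : Type*} [Fintype V] {G : SimpleGraph V} {p : ℕ} (h : H4StarData G p) :
    G.chromaticNumber = ((p + 2 : ℕ) : ℕ∞) ∧
    ∃ φ : V → Fin (p + 3), IsProperColoring G (p + 3) φ ∧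
      ∀ x : V, ∀ col : Fin (p + 3), ∃ y, (y = x ∨ G.Adj x y) ∧ φ y = col := by
  classical
  constructor
  · -- chromatic number
    have hcol : G.Colorable (p + 2) :=
      ⟨SimpleGraph.Coloring.mk h.col2 (fun {a b} hab => h.col2_proper hab)⟩
    have hne12 : h.v 1 ≠ h.v 2 := fun e => absurd (h.inj e) (by decide)
    set s : Finset V := insert (h.v 1) (insert (h.v 2) h.S1) with hs
    have hcard : s.card = p + 2 := by
      rw [hs, Finset.card_insert_of_notMem, Finset.card_insert_of_notMem (h.notin 2).1,
        h.card1]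
      simp only [Finset.mem_insert]
      push_neg
      exact ⟨hne12, (h.notin 1).1⟩
    have hclique : G.IsClique s := by
      intro x hx y hy hxy
      rw [h.adj_iff]
      refine ⟨hxy, ?_⟩
      simp only [hs, Finset.coe_insert, Set.mem_insert_iff, Finset.mem_coe,
        Finset.mem_insert] at hx hy
      rcases hx with rfl | rfl | hx <;> rcases hy with rfl | rfl | hy
      · exact absurd rfl hxy
      · exact Or.inl ⟨1, 2, rfl, rfl, Or.inl rfl⟩
      · exact Or.inr (Or.inr (Or.inr (Or.inr (Or.inl ⟨hy, Or.inr (Or.inl rfl)⟩))))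
      · exact Or.inl ⟨2, 1, rfl, rfl, Or.inr rfl⟩
      · exact absurd rfl hxy
      · exact Or.inr (Or.inr (Or.inr (Or.inr (Or.inl ⟨hy, Or.inr (Or.inr (Or.inl rfl))⟩))))
      · exact Or.inr (Or.inr (Or.inr (Or.inl ⟨hx, Or.inr (Or.inl rfl)⟩)))
      · exact Or.inr (Or.inr (Or.inr (Or.inl ⟨hx, Or.inr (Or.inr (Or.inl rfl))⟩)))
      · exact Or.inr (Or.inl ⟨hx, hy⟩)
    have hlow := hclique.card_le_chromaticNumber
    rw [hcard] at hlow
    exact le_antisymm hcol.chromaticNumber_le hlow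
  · -- frozen coloring
    refine ⟨h.col3, h.col3_proper, ?_⟩
    intro x col
    by_cases hcol : col.val < p
    · -- small colors live on the cliques
      have key1 : ∀ hx1 : x ∈ h.S1 ∨ (∃ i, x = h.v i ∧ (i = 0 ∨ i = 1 ∨ i = 2 ∨ i = 5)),
          ∃ y, (y = x ∨ G.Adj x y) ∧ h.col3 y = col := by
        intro hx1
        refine ⟨↑(h.e1.symm ⟨col.val, hcol⟩), ?_, by rw [h.col3_e1_symm]; exact Fin.ext rfl⟩
        set y := (↑(h.e1.symm ⟨col.val, hcol⟩) : V) with hy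
        have hyS : y ∈ h.S1 := (h.e1.symm _).2
        rcases hx1 with hx1 | ⟨i, rfl, hi⟩
        · by_cases hxy : y = x
          · exact Or.inl hxy
          · exact Or.inr ((h.adj_iff x y).mpr
              ⟨fun e => hxy e.symm, Or.inr (Or.inl ⟨hx1, hyS⟩)⟩)
        · refine Or.inr ((h.adj_iff _ y).mpr
            ⟨fun e => (h.notin i).1 (e ▸ hyS), ?_⟩)
          exact Or.inr (Or.inr (Or.inr (Or.inr (Or.inl ⟨hyS, by
            rcases hi with rfl | rfl | rfl | rfl <;> tauto⟩))))
      have key2 : ∀ hx2 : x ∈ h.S2 ∨ (∃ i, x = h.v i ∧ (i = 1 ∨ i = 2 ∨ i = 3 ∨ i = 4)),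
          ∃ y, (y = x ∨ G.Adj x y) ∧ h.col3 y = col := by
        intro hx2
        refine ⟨↑(h.e2.symm ⟨col.val, hcol⟩), ?_, by rw [h.col3_e2_symm]; exact Fin.ext rfl⟩
        set y := (↑(h.e2.symm ⟨col.val, hcol⟩) : V) with hy
        have hyS : y ∈ h.S2 := (h.e2.symm _).2
        rcases hx2 with hx2 | ⟨i, rfl, hi⟩
        · by_cases hxy : y = x
          · exact Or.inl hxy
          · exact Or.inr ((h.adj_iff x y).mpr
              ⟨fun e => hxy e.symm, Or.inr (Or.inr (Or.inl ⟨hx2, hyS⟩))⟩)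
        · refine Or.inr ((h.adj_iff _ y).mpr
            ⟨fun e => (h.notin i).2 (e ▸ hyS), ?_⟩)
          exact Or.inr (Or.inr (Or.inr (Or.inr (Or.inr (Or.inr ⟨hyS, by
            rcases hi with rfl | rfl | rfl | rfl <;> tauto⟩)))))
      rcases h.cover x with (hx | hx) | ⟨i, rfl⟩
      · exact key1 (Or.inl hx)
      · exact key2 (Or.inl hx)
      · by_cases hi : i = 3 ∨ i = 4
        · exact key2 (Or.inr ⟨i, rfl, by tauto⟩)
        · have hcases : ∀ j : Fin 6, ¬(j = 3 ∨ j = 4) →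
              (j = 0 ∨ j = 1 ∨ j = 2 ∨ j = 5) := by decide
          exact key1 (Or.inr ⟨i, rfl, hcases i hi⟩)
    · -- large colors live on the cycle
      push_neg at hcol
      have hcol3 : col.val - p < 3 := by omega
      set r : Fin 3 := ⟨col.val - p, hcol3⟩ with hr
      have colval : ∀ j : Fin 6, j.val % 3 = r.val → h.col3 (h.v j) = col := by
        intro j hj
        rw [h.col3_v]
        apply Fin.ext
        simp only [hj, hr]
        have := col.isLt
        omega
      rcases h.cover x with (hx | hx) | ⟨i, rfl⟩
      · -- x ∈ S1 : use v 0, v 1, v 2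
        have key : ∀ r : Fin 3, ∃ j : Fin 6,
            (j = 0 ∨ j = 1 ∨ j = 2 ∨ j = 5) ∧ j.val % 3 = r.val := by decide
        obtain ⟨j, hj1, hj2⟩ := key r
        refine ⟨h.v j, Or.inr ((h.adj_iff _ _).mpr
          ⟨fun e => (h.notin j).1 (e ▸ hx), ?_⟩), colval j hj2⟩
        exact Or.inr (Or.inr (Or.inr (Or.inl ⟨hx, by
          rcases hj1 with rfl | rfl | rfl | rfl <;> tauto⟩)))
      · -- x ∈ S2 : use v 1, v 2, v 3
        have key : ∀ r : Fin 3, ∃ j : Fin 6,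
            (j = 1 ∨ j = 2 ∨ j = 3 ∨ j = 4) ∧ j.val % 3 = r.val := by decide
        obtain ⟨j, hj1, hj2⟩ := key r
        refine ⟨h.v j, Or.inr ((h.adj_iff _ _).mpr
          ⟨fun e => (h.notin j).2 (e ▸ hx), ?_⟩), colval j hj2⟩
        exact Or.inr (Or.inr (Or.inr (Or.inr (Or.inr (Or.inl ⟨hx, by
          rcases hj1 with rfl | rfl | rfl | rfl <;> tauto⟩)))))
      · -- x = v i : use the cycle
        have key : ∀ (i : Fin 6) (r : Fin 3), ∃ j : Fin 6,
            (j = i ∨ (i + 1 = j ∨ j + 1 = i)) ∧ j.val % 3 = r.val := by decide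
        obtain ⟨j, hj1, hj2⟩ := key i r
        refine ⟨h.v j, ?_, colval j hj2⟩
        rcases hj1 with rfl | hc
        · exact Or.inl rfl
        · refine Or.inr ((h.adj_iff _ _).mpr
            ⟨fun e => H4StarData.c6adj_ne hc (h.inj e), Or.inl ⟨i, j, rfl, rfl, hc⟩⟩)
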